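/- Let (X,Ω) be a measurable space and E a Dedekind complete vector lattice. The span M(X,Ω,E) of the finite E⁺-valued measures inside the E-valued set maps, ordered pointwise, is a Dedekind complete vector lattice whose positive cone is exactly the set of finite E⁺-valued measures; in particular, if μ, ν are finite E⁺-valued measures and μ − ν ≥ 0 pointwise, then μ − ν is σ-additive. -/

import Mathlib

variable {X : Type*} [MeasurableSpace X]
variable {E : Type*} [Lattice E] [AddCommGroup E]
  [CovariantClass E E (· + ·) (· ≤ ·)]

/-- A finite `E⁺`-valued measure: a σ-additive set map into `E⁺`
vanishing at `∅`. -/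
def IsFinMeasure (μ : Set X → E) : Prop :=
  μ ∅ = 0 ∧ (∀ Δ, MeasurableSet Δ → 0 ≤ μ Δ) ∧
    ∀ Δ : ℕ → Set X, (∀ n, MeasurableSet (Δ n)) →
      Pairwise (Function.onFun Disjoint Δ) →
      IsLUB (Set.range fun N => ∑ n ∈ Finset.range N, μ (Δ n))
        (μ (⋃ n, Δ n))

/-- Membership in `M(X,Ω,E)`, the span of the finite `E⁺`-valued measures:
a difference of two finite `E⁺`-valued measures (on the σ-algebra). -/
def InSpanMeasures (μ : Set X → E) : Prop :=
  ∃ μ₁ μ₂ : Set X → E, IsFinMeasure μ₁ ∧ IsFinMeasure μ₂ ∧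
    ∀ Δ, MeasurableSet Δ → μ Δ = μ₁ Δ - μ₂ Δ

/-- The pointwise order on `M(X,Ω,E)` (over the σ-algebra). -/
def MeasLE (μ ν : Set X → E) : Prop :=
  ∀ Δ, MeasurableSet Δ → μ Δ ≤ ν Δ

set_option linter.unusedSectionVars false

namespace Stmt17Aux

lemma psum_mono {f : ℕ → E} (hf : ∀ n, 0 ≤ f n) :
    Monotone (fun N => ∑ n ∈ Finset.range N, f n) := by
  apply monotone_nat_of_le_succ
  intro n
  rw [Finset.sum_range_succ]
  exact le_add_of_nonneg_right (hf n)

/-- binary additivity -/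
lemma add_of_disjoint {μ : Set X → E} (hμ : IsFinMeasure μ) {A B : Set X}
    (hA : MeasurableSet A) (hB : MeasurableSet B) (hAB : Disjoint A B) :
    μ (A ∪ B) = μ A + μ B := by
  obtain ⟨h0, hpos, hσ⟩ := hμ
  set Δ : ℕ → Set X := fun n => if n = 0 then A else if n = 1 then B else ∅ with hΔ
  have hmeas : ∀ n, MeasurableSet (Δ n) := by
    intro n
    simp only [hΔ]
    split_ifs <;> first | exact hA | exact hB | exact MeasurableSet.empty
  have hdisj : Pairwise (Function.onFun Disjoint Δ) := by
    intro i j hij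
    simp only [Function.onFun, hΔ]
    split_ifs <;> first
      | omega
      | exact hAB
      | exact hAB.symm
      | exact Set.disjoint_empty _
      | exact Set.empty_disjoint _
  have hU : (⋃ n, Δ n) = A ∪ B := by
    ext x
    simp only [Set.mem_iUnion, Set.mem_union]
    constructor
    · rintro ⟨n, hn⟩
      simp only [hΔ] at hn
      split_ifs at hn
      · exact Or.inl hn
      · exact Or.inr hn
      · exact absurd hn (Set.notMem_empty x)
    · rintro (hx | hx)
      exacts [⟨0, by simp [hΔ, hx]⟩, ⟨1, by simp [hΔ, hx]⟩]
  have hlub := hσ Δ hmeas hdisj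
  rw [hU] at hlub
  have hsum2 : (∑ n ∈ Finset.range 2, μ (Δ n)) = μ A + μ B := by
    simp [hΔ, Finset.sum_range_succ]
  have hub : IsLUB (Set.range fun N => ∑ n ∈ Finset.range N, μ (Δ n)) (μ A + μ B) := by
    constructor
    · rintro e ⟨N, rfl⟩
      have h1 : (∑ n ∈ Finset.range N, μ (Δ n)) ≤ ∑ n ∈ Finset.range (max N 2), μ (Δ n) :=
        psum_mono (fun n => hpos _ (hmeas n)) (le_max_left _ _)
      have h2 : (∑ n ∈ Finset.range (max N 2), μ (Δ n)) = ∑ n ∈ Finset.range 2, μ (Δ n) := by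
        refine (Finset.sum_subset (Finset.range_subset_range.mpr (le_max_right _ _)) ?_).symm
        intro x _ hx
        simp only [Finset.mem_range, not_lt] at hx
        have hx0 : x ≠ 0 := by omega
        have hx1 : x ≠ 1 := by omega
        simp [hΔ, hx0, hx1, h0]
      exact h1.trans (h2.trans hsum2).le
    · intro c hc
      have : (∑ n ∈ Finset.range 2, μ (Δ n)) ≤ c := hc ⟨2, rfl⟩
      rwa [hsum2] at this
  exact hub.unique hlub ▸ rfl

lemma mono {μ : Set X → E} (hμ : IsFinMeasure μ) {A B : Set X}
    (hA : MeasurableSet A) (hB : MeasurableSet B) (hAB : A ⊆ B) :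
    μ A ≤ μ B := by
  have : μ B = μ A + μ (B \ A) := by
    rw [← add_of_disjoint hμ hA (hB.diff hA) disjoint_sdiff_self_right,
      Set.union_diff_cancel hAB]
  rw [this]
  exact le_add_of_nonneg_right (hμ.2.1 _ (hB.diff hA))

/-- finite additivity over an initial segment -/
lemma finadd {μ : Set X → E} (hμ : IsFinMeasure μ) {Δ : ℕ → Set X}
    (hm : ∀ n, MeasurableSet (Δ n)) (hd : Pairwise (Function.onFun Disjoint Δ)) (N : ℕ) :
    μ (⋃ n ∈ Finset.range N, Δ n) = ∑ n ∈ Finset.range N, μ (Δ n) := by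
  induction N with
  | zero => simpa using hμ.1
  | succ N ih =>
    have hmb : MeasurableSet (⋃ n ∈ Finset.range N, Δ n) :=
      MeasurableSet.biUnion (Finset.range N).countable_toSet (fun n _ => hm n)
    have hd' : Disjoint (Δ N) (⋃ n ∈ Finset.range N, Δ n) := by
      rw [Set.disjoint_right]
      rintro x hx hx'
      simp only [Set.mem_iUnion, Finset.mem_range] at hx
      obtain ⟨i, hi, hxi⟩ := hx
      exact (hd (show i ≠ N by omega)).le_bot ⟨hxi, hx'⟩
    rw [Finset.range_add_one, Finset.set_biUnion_insert, Finset.sum_insert (by simp),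
      add_of_disjoint hμ (hm N) hmb hd', ih]

lemma meas_biUnion_measurable {Δ : ℕ → Set X} (hm : ∀ n, MeasurableSet (Δ n)) (N : ℕ) :
    MeasurableSet (⋃ n ∈ Finset.range N, Δ n) :=
  MeasurableSet.biUnion (Finset.range N).countable_toSet (fun n _ => hm n)


/-- sum of LUBs of monotone sequences -/
lemma isLUB_add_seq {f g : ℕ → E} (hfm : Monotone f) (hgm : Monotone g)
    {a b : E} (ha : IsLUB (Set.range f) a) (hb : IsLUB (Set.range g) b) :
    IsLUB (Set.range fun N => f N + g N) (a + b) := by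
  constructor
  · rintro e ⟨N, rfl⟩
    exact add_le_add (ha.1 ⟨N, rfl⟩) (hb.1 ⟨N, rfl⟩)
  · intro c hc
    have h1 : ∀ N, f N + b ≤ c := by
      intro N
      refine le_sub_iff_add_le'.mp (hb.2 ?_)
      rintro e ⟨M, rfl⟩
      rw [le_sub_iff_add_le']
      calc f N + g M ≤ f (max N M) + g (max N M) :=
            add_le_add (hfm (le_max_left _ _)) (hgm (le_max_right _ _))
        _ ≤ c := hc ⟨max N M, rfl⟩
    refine le_sub_iff_add_le.mp (ha.2 ?_)
    rintro e ⟨N, rfl⟩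
    rw [le_sub_iff_add_le]
    exact h1 N

lemma psum_apply_mono {μ : Set X → E} (hμ : IsFinMeasure μ) {Δ : ℕ → Set X}
    (hm : ∀ n, MeasurableSet (Δ n)) :
    Monotone (fun N => ∑ n ∈ Finset.range N, μ (Δ n)) :=
  psum_mono (fun n => hμ.2.1 _ (hm n))

/-- sum of finite measures -/
lemma sum_measure {μ ν : Set X → E} (hμ : IsFinMeasure μ) (hν : IsFinMeasure ν) :
    IsFinMeasure (fun Δ => μ Δ + ν Δ) := by
  refine ⟨by simp [hμ.1, hν.1], fun Δ hΔ => add_nonneg (hμ.2.1 _ hΔ) (hν.2.1 _ hΔ), ?_⟩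
  intro Δ hm hd
  have := isLUB_add_seq (psum_apply_mono hμ hm) (psum_apply_mono hν hm)
    (hμ.2.2 Δ hm hd) (hν.2.2 Δ hm hd)
  simpa [Finset.sum_add_distrib] using this

/-- splitting off a tail -/
lemma split_tail {μ : Set X → E} (hμ : IsFinMeasure μ) {Δ : ℕ → Set X}
    (hm : ∀ n, MeasurableSet (Δ n)) (hd : Pairwise (Function.onFun Disjoint Δ)) (N : ℕ) :
    μ (⋃ n, Δ n) = (∑ n ∈ Finset.range N, μ (Δ n)) + μ (⋃ n, Δ (n + N)) := by
  have hU : (⋃ n, Δ n) = (⋃ n ∈ Finset.range N, Δ n) ∪ (⋃ n, Δ (n + N)) := by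
    ext x
    simp only [Set.mem_iUnion, Set.mem_union, Finset.mem_range]
    constructor
    · rintro ⟨n, hn⟩
      rcases lt_or_ge n N with h | h
      · exact Or.inl ⟨n, h, hn⟩
      · exact Or.inr ⟨n - N, by rwa [Nat.sub_add_cancel h]⟩
    · rintro (⟨n, _, hn⟩ | ⟨n, hn⟩)
      exacts [⟨n, hn⟩, ⟨n + N, hn⟩]
  have hmb : MeasurableSet (⋃ n ∈ Finset.range N, Δ n) := meas_biUnion_measurable hm N
  have hmt : MeasurableSet (⋃ n, Δ (n + N)) := MeasurableSet.iUnion (fun n => hm _)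
  have hdisj : Disjoint (⋃ n ∈ Finset.range N, Δ n) (⋃ n, Δ (n + N)) := by
    rw [Set.disjoint_left]
    rintro x hx hx'
    simp only [Set.mem_iUnion, Finset.mem_range] at hx hx'
    obtain ⟨i, hi, hxi⟩ := hx
    obtain ⟨j, hxj⟩ := hx'
    exact (hd (show i ≠ j + N by omega)).le_bot ⟨hxi, hxj⟩
  rw [hU, add_of_disjoint hμ hmb hmt hdisj, finadd hμ hm hd N]

/-- Part 1: difference of measures, pointwise ordered -/
lemma diff_measure {μ ν : Set X → E} (hμ : IsFinMeasure μ) (hν : IsFinMeasure ν)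
    (hle : ∀ Δ, MeasurableSet Δ → ν Δ ≤ μ Δ) :
    IsFinMeasure (fun Δ => μ Δ - ν Δ) := by
  refine ⟨by simp [hμ.1, hν.1], fun Δ hΔ => sub_nonneg.mpr (hle Δ hΔ), ?_⟩
  intro Δ hm hd
  have hmU : MeasurableSet (⋃ n, Δ n) := MeasurableSet.iUnion hm
  have hsum : ∀ N, (∑ n ∈ Finset.range N, (μ (Δ n) - ν (Δ n)))
      = (∑ n ∈ Finset.range N, μ (Δ n)) - ∑ n ∈ Finset.range N, ν (Δ n) :=
    fun N => Finset.sum_sub_distrib _ _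
  constructor
  · rintro e ⟨N, rfl⟩
    simp only [hsum]
    have hT : MeasurableSet (⋃ n, Δ (n + N)) := MeasurableSet.iUnion (fun n => hm _)
    have key : μ (⋃ n, Δ n) - ν (⋃ n, Δ n)
        = ((∑ n ∈ Finset.range N, μ (Δ n)) - ∑ n ∈ Finset.range N, ν (Δ n))
          + (μ (⋃ n, Δ (n + N)) - ν (⋃ n, Δ (n + N))) := by
      rw [split_tail hμ hm hd N, split_tail hν hm hd N]
      abel
    rw [key]
    exact le_add_of_nonneg_right (sub_nonneg.mpr (hle _ hT))
  · intro c hc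
    rw [sub_le_iff_le_add]
    refine (hμ.2.2 Δ hm hd).2 ?_
    rintro e ⟨N, rfl⟩
    have h1 : (∑ n ∈ Finset.range N, μ (Δ n)) - ∑ n ∈ Finset.range N, ν (Δ n) ≤ c := by
      have := hc ⟨N, rfl⟩
      simpa [hsum] using this
    calc (∑ n ∈ Finset.range N, μ (Δ n))
        = ((∑ n ∈ Finset.range N, μ (Δ n)) - ∑ n ∈ Finset.range N, ν (Δ n))
          + ∑ n ∈ Finset.range N, ν (Δ n) := by abel
      _ ≤ c + ν (⋃ n, Δ n) := add_le_add h1 ((hν.2.2 Δ hm hd).1 ⟨N, rfl⟩)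

/-- transfer along agreement on measurable sets -/
lemma congr_meas {f g : Set X → E} (hfg : ∀ Δ, MeasurableSet Δ → f Δ = g Δ)
    (hf : IsFinMeasure f) : IsFinMeasure g := by
  refine ⟨(hfg ∅ MeasurableSet.empty) ▸ hf.1, fun Δ hΔ => (hfg Δ hΔ) ▸ hf.2.1 Δ hΔ, ?_⟩
  intro Δ hm hd
  have h1 : ∀ N, (∑ n ∈ Finset.range N, g (Δ n)) = ∑ n ∈ Finset.range N, f (Δ n) :=
    fun N => Finset.sum_congr rfl (fun n _ => (hfg _ (hm n)).symm)
  have h2 : g (⋃ n, Δ n) = f (⋃ n, Δ n) := (hfg _ (MeasurableSet.iUnion hm)).symm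
  simp only [h1, h2]
  exact hf.2.2 Δ hm hd

/-- Part 2 -/
lemma pos_span_measure {μ : Set X → E} (hμ : InSpanMeasures μ)
    (hpos : ∀ Δ, MeasurableSet Δ → 0 ≤ μ Δ) : IsFinMeasure μ := by
  obtain ⟨μ₁, μ₂, h1, h2, heq⟩ := hμ
  refine congr_meas (f := fun Δ => μ₁ Δ - μ₂ Δ) (fun Δ hΔ => (heq Δ hΔ).symm) ?_
  refine diff_measure h1 h2 (fun Δ hΔ => ?_)
  have := hpos Δ hΔ
  rw [heq Δ hΔ] at this
  exact sub_nonneg.mp this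


lemma sum_le_sum' {s : Finset ℕ} {f g : ℕ → E} (h : ∀ n ∈ s, f n ≤ g n) :
    (∑ n ∈ s, f n) ≤ ∑ n ∈ s, g n := by
  induction s using Finset.cons_induction with
  | empty => simp
  | cons a s ha ih =>
    rw [Finset.sum_cons, Finset.sum_cons]
    exact add_le_add (h a (Finset.mem_cons_self a s)) (ih (fun n hn => h n (Finset.mem_cons_of_mem hn)))

/-- sum of LUBs is below anything dominating all finite selections -/
lemma sum_isLUB_le {S : ℕ → Set E} {s : ℕ → E} {N : ℕ}
    (hS : ∀ n, n < N → IsLUB (S n) (s n))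
    {c : E} (hc : ∀ e : ℕ → E, (∀ n, n < N → e n ∈ S n) →
      (∑ n ∈ Finset.range N, e n) ≤ c) :
    (∑ n ∈ Finset.range N, s n) ≤ c := by
  induction N generalizing c with
  | zero => simpa using hc (fun _ => 0) (by omega)
  | succ N ih =>
    rw [Finset.sum_range_succ, ← le_sub_iff_add_le']
    refine (hS N (by omega)).2 ?_
    rintro eN heN
    rw [le_sub_iff_add_le', ← le_sub_iff_add_le]
    refine ih (fun n hn => hS n (by omega)) ?_
    intro e he
    rw [le_sub_iff_add_le]
    have key := hc (fun n => if n = N then eN else e n) ?_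
    · have hsum : (∑ n ∈ Finset.range N, (if n = N then eN else e n))
          = ∑ n ∈ Finset.range N, e n :=
        Finset.sum_congr rfl (fun n hn => by
          simp [Nat.ne_of_lt (Finset.mem_range.mp hn)])
      rw [Finset.sum_range_succ, hsum, if_pos rfl] at key
      exact key
    · intro n hn
      by_cases h : n = N
      · subst h; simpa using heN
      · have hn' : n < N := by omega
        simpa [h] using he n hn'

/-- the set over which the sup defining `α ⊔ β` is taken -/
def supSet (α β : Set X → E) (Δ : Set X) : Set E :=
  {e | ∃ A, MeasurableSet A ∧ A ⊆ Δ ∧ e = α A + β (Δ \ A)}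

lemma supSet_nonempty (α β : Set X → E) (Δ : Set X) : (supSet α β Δ).Nonempty :=
  ⟨α ∅ + β (Δ \ ∅), ∅, MeasurableSet.empty, Set.empty_subset Δ, rfl⟩

lemma supSet_bddAbove {α β : Set X → E} (hα : IsFinMeasure α) (hβ : IsFinMeasure β)
    {Δ : Set X} (hΔ : MeasurableSet Δ) : BddAbove (supSet α β Δ) := by
  refine ⟨α Δ + β Δ, ?_⟩
  rintro e ⟨A, hAm, hAΔ, rfl⟩
  exact add_le_add (mono hα hAm hΔ hAΔ) (mono hβ (hΔ.diff hAm) hΔ Set.diff_subset)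

variable (hDed : ∀ T : Set E, T.Nonempty → BddAbove T → ∃ a, IsLUB T a)

open Classical in
noncomputable def supMeas (α β : Set X → E) (hα : IsFinMeasure α) (hβ : IsFinMeasure β) :
    Set X → E :=
  fun Δ => if h : MeasurableSet Δ then
    (hDed (supSet α β Δ) (supSet_nonempty α β Δ) (supSet_bddAbove hα hβ h)).choose else 0

lemma supMeas_isLUB {α β : Set X → E} (hα : IsFinMeasure α) (hβ : IsFinMeasure β)
    {Δ : Set X} (hΔ : MeasurableSet Δ) :
    IsLUB (supSet α β Δ) (supMeas hDed α β hα hβ Δ) := by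
  have heq : supMeas hDed α β hα hβ Δ
      = (hDed (supSet α β Δ) (supSet_nonempty α β Δ) (supSet_bddAbove hα hβ hΔ)).choose :=
    dif_pos hΔ
  rw [heq]
  exact (hDed (supSet α β Δ) (supSet_nonempty α β Δ) (supSet_bddAbove hα hβ hΔ)).choose_spec

lemma supMeas_fin {α β : Set X → E} (hα : IsFinMeasure α) (hβ : IsFinMeasure β) :
    IsFinMeasure (supMeas hDed α β hα hβ) := by
  have hzero : supMeas hDed α β hα hβ ∅ = 0 := by
    have h1 := supMeas_isLUB hDed hα hβ MeasurableSet.empty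
    have h2 : supSet α β (∅ : Set X) = {0} := by
      ext e
      constructor
      · rintro ⟨A, _, hA, rfl⟩
        have : A = ∅ := Set.subset_empty_iff.mp hA
        subst this
        simp [hα.1, hβ.1]
      · rintro rfl
        exact ⟨∅, MeasurableSet.empty, le_rfl, by simp [hα.1, hβ.1]⟩
    rw [h2] at h1
    exact h1.unique isLUB_singleton
  refine ⟨hzero, ?_, ?_⟩
  · intro Δ hΔ
    have h1 := (supMeas_isLUB hDed hα hβ hΔ).1
      (show β Δ ∈ supSet α β Δ from ⟨∅, MeasurableSet.empty, Set.empty_subset Δ, by simp [hα.1]⟩)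
    exact (hβ.2.1 Δ hΔ).trans h1
  · intro Δ hm hd
    have hmU : MeasurableSet (⋃ n, Δ n) := MeasurableSet.iUnion hm
    constructor
    · -- upper bound: partial sums of sups are ≤ sup at the union
      rintro x ⟨N, rfl⟩
      refine sum_isLUB_le (fun n _ => supMeas_isLUB hDed hα hβ (hm n)) ?_
      intro e he
      -- choose witnesses
      choose A hAm hAsub hAe using he
      set A' : ℕ → Set X := fun n => if h : n < N then A n h else ∅ with hA'
      have hA'm : ∀ n, MeasurableSet (A' n) := by
        intro n; rw [hA']; dsimp only; split_ifs with h
        · exact hAm n h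
        · exact MeasurableSet.empty
      have hA'sub : ∀ n, A' n ⊆ Δ n := by
        intro n; rw [hA']; dsimp only; split_ifs with h
        · exact hAsub n h
        · exact Set.empty_subset _
      have hA'd : Pairwise (Function.onFun Disjoint A') :=
        fun i j hij => Set.disjoint_of_subset (hA'sub i) (hA'sub j) (hd hij)
      have hB'm : ∀ n, MeasurableSet (Δ n \ A' n) := fun n => (hm n).diff (hA'm n)
      have hB'd : Pairwise (Function.onFun Disjoint (fun n => Δ n \ A' n)) :=
        fun i j hij => Set.disjoint_of_subset Set.diff_subset Set.diff_subset (hd hij)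
      have he' : ∀ n, n < N → e n = α (A' n) + β (Δ n \ A' n) := by
        intro n hn
        rw [hA']; dsimp only; rw [dif_pos hn]; exact hAe n hn
      have hsum : (∑ n ∈ Finset.range N, e n)
          = α (⋃ n ∈ Finset.range N, A' n) + β (⋃ n ∈ Finset.range N, (Δ n \ A' n)) := by
        rw [finadd hα hA'm hA'd N, finadd hβ hB'm hB'd N, ← Finset.sum_add_distrib]
        exact Finset.sum_congr rfl (fun n hn => he' n (Finset.mem_range.mp hn))
      rw [hsum]
      set AA := ⋃ n ∈ Finset.range N, A' n with hAA
      have hAAm : MeasurableSet AA := meas_biUnion_measurable hA'm N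
      have hAAsub : AA ⊆ ⋃ n, Δ n := by
        rw [hAA]
        refine Set.iUnion₂_subset (fun n _ => ?_)
        exact (hA'sub n).trans (Set.subset_iUnion Δ n)
      have hBsub : (⋃ n ∈ Finset.range N, (Δ n \ A' n)) ⊆ (⋃ n, Δ n) \ AA := by
        rintro x hx
        simp only [Set.mem_iUnion, Finset.mem_range] at hx
        obtain ⟨n, hn, hxn, hxa⟩ := hx
        refine ⟨Set.subset_iUnion Δ n hxn, ?_⟩
        rw [hAA]
        simp only [Set.mem_iUnion, Finset.mem_range]
        rintro ⟨m, hm', hxm⟩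
        rcases eq_or_ne m n with rfl | hmn
        · exact hxa hxm
        · exact ((hd hmn).le_bot ⟨hA'sub m hxm, hxn⟩).elim
      have : α AA + β (⋃ n ∈ Finset.range N, (Δ n \ A' n))
          ≤ α AA + β ((⋃ n, Δ n) \ AA) := by
        refine add_le_add le_rfl (mono hβ ?_ (hmU.diff hAAm) hBsub)
        exact meas_biUnion_measurable hB'm N
      refine this.trans ?_
      exact (supMeas_isLUB hDed hα hβ hmU).1 ⟨AA, hAAm, hAAsub, rfl⟩
    · -- least
      intro c hc
      refine (supMeas_isLUB hDed hα hβ hmU).2 ?_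
      rintro e ⟨A, hAm, hAsub, rfl⟩
      set An : ℕ → Set X := fun n => A ∩ Δ n with hAn
      set Bn : ℕ → Set X := fun n => Δ n \ A with hBn
      have hAnm : ∀ n, MeasurableSet (An n) := fun n => hAm.inter (hm n)
      have hBnm : ∀ n, MeasurableSet (Bn n) := fun n => (hm n).diff hAm
      have hAnd : Pairwise (Function.onFun Disjoint An) :=
        fun i j hij => Set.disjoint_of_subset Set.inter_subset_right
          Set.inter_subset_right (hd hij)
      have hBnd : Pairwise (Function.onFun Disjoint Bn) :=
        fun i j hij => Set.disjoint_of_subset Set.diff_subset Set.diff_subset (hd hij)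
      have hAnU : (⋃ n, An n) = A := by
        rw [hAn, ← Set.inter_iUnion]
        exact Set.inter_eq_left.mpr hAsub
      have hBnU : (⋃ n, Bn n) = (⋃ n, Δ n) \ A := by
        rw [hBn, Set.iUnion_diff]
      have hlubα := hα.2.2 An hAnm hAnd
      have hlubβ := hβ.2.2 Bn hBnm hBnd
      rw [hAnU] at hlubα
      rw [hBnU] at hlubβ
      have := isLUB_add_seq (psum_apply_mono hα hAnm) (psum_apply_mono hβ hBnm) hlubα hlubβ
      refine this.2 ?_
      rintro x ⟨N, rfl⟩
      have hterm : ∀ n ∈ Finset.range N,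
          α (An n) + β (Bn n) ≤ supMeas hDed α β hα hβ (Δ n) := by
        intro n _
        refine (supMeas_isLUB hDed hα hβ (hm n)).1 ⟨An n, hAnm n, Set.inter_subset_right, ?_⟩
        congr 1
        rw [hAn, hBn]
        dsimp only
        rw [Set.diff_inter_self_eq_diff]
      calc (∑ n ∈ Finset.range N, α (An n)) + ∑ n ∈ Finset.range N, β (Bn n)
          = ∑ n ∈ Finset.range N, (α (An n) + β (Bn n)) := by
            rw [Finset.sum_add_distrib]
        _ ≤ ∑ n ∈ Finset.range N, supMeas hDed α β hα hβ (Δ n) := sum_le_sum' hterm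
        _ ≤ c := hc ⟨N, rfl⟩


lemma span_add {ρ : Set X → E} (hρ : InSpanMeasures ρ) {A B : Set X}
    (hA : MeasurableSet A) (hB : MeasurableSet B) (hAB : Disjoint A B) :
    ρ (A ∪ B) = ρ A + ρ B := by
  obtain ⟨ρ₁, ρ₂, h1, h2, heq⟩ := hρ
  rw [heq _ (hA.union hB), heq _ hA, heq _ hB,
    add_of_disjoint h1 hA hB hAB, add_of_disjoint h2 hA hB hAB]
  abel

include hDed in
/-- Part 3: binary suprema exist in the span -/
lemma span_sup {μ ν : Set X → E} (hμ : InSpanMeasures μ) (hν : InSpanMeasures ν) :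
    ∃ ξ : Set X → E, InSpanMeasures ξ ∧ MeasLE μ ξ ∧ MeasLE ν ξ ∧
      ∀ ρ : Set X → E, InSpanMeasures ρ → MeasLE μ ρ → MeasLE ν ρ → MeasLE ξ ρ := by
  obtain ⟨μ₁, μ₂, hμ₁, hμ₂, hμeq⟩ := hμ
  obtain ⟨ν₁, ν₂, hν₁, hν₂, hνeq⟩ := hν
  have hα : IsFinMeasure (fun Δ => μ₁ Δ + ν₂ Δ) := sum_measure hμ₁ hν₂
  have hβ : IsFinMeasure (fun Δ => μ₂ Δ + ν₁ Δ) := sum_measure hμ₂ hν₁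
  set η := supMeas hDed _ _ hα hβ with hη
  have hηfin : IsFinMeasure η := supMeas_fin hDed hα hβ
  refine ⟨fun Δ => η Δ - (μ₂ Δ + ν₂ Δ), ⟨η, fun Δ => μ₂ Δ + ν₂ Δ, hηfin, sum_measure hμ₂ hν₂,
    fun Δ _ => rfl⟩, ?_, ?_, ?_⟩
  · -- μ ≤ ξ
    intro Δ hΔ
    have hel : μ₁ Δ + ν₂ Δ ≤ η Δ := by
      refine (supMeas_isLUB hDed hα hβ hΔ).1 ⟨Δ, hΔ, le_rfl, ?_⟩
      simp [hμ₂.1, hν₁.1]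
    rw [hμeq Δ hΔ]
    have : μ₁ Δ - μ₂ Δ = (μ₁ Δ + ν₂ Δ) - (μ₂ Δ + ν₂ Δ) := by abel
    rw [this]
    exact sub_le_sub_right hel _
  · -- ν ≤ ξ
    intro Δ hΔ
    have hel : μ₂ Δ + ν₁ Δ ≤ η Δ := by
      refine (supMeas_isLUB hDed hα hβ hΔ).1 ⟨∅, MeasurableSet.empty, Set.empty_subset Δ, ?_⟩
      simp [hμ₁.1, hν₂.1]
    rw [hνeq Δ hΔ]
    have : ν₁ Δ - ν₂ Δ = (μ₂ Δ + ν₁ Δ) - (μ₂ Δ + ν₂ Δ) := by abel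
    rw [this]
    exact sub_le_sub_right hel _
  · -- least among span upper bounds
    intro ρ hρ hμρ hνρ Δ hΔ
    rw [sub_le_iff_le_add]
    refine (supMeas_isLUB hDed hα hβ hΔ).2 ?_
    rintro e ⟨A, hAm, hAsub, rfl⟩
    have hBm : MeasurableSet (Δ \ A) := hΔ.diff hAm
    have hdAB : Disjoint A (Δ \ A) := disjoint_sdiff_self_right
    have hABU : A ∪ (Δ \ A) = Δ := Set.union_diff_cancel hAsub
    have hρΔ : ρ Δ = ρ A + ρ (Δ \ A) := by
      conv_lhs => rw [← hABU]
      rw [span_add hρ hAm hBm hdAB]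
    have hμ₂Δ : μ₂ Δ = μ₂ A + μ₂ (Δ \ A) := by
      conv_lhs => rw [← hABU]
      rw [add_of_disjoint hμ₂ hAm hBm hdAB]
    have hν₂Δ : ν₂ Δ = ν₂ A + ν₂ (Δ \ A) := by
      conv_lhs => rw [← hABU]
      rw [add_of_disjoint hν₂ hAm hBm hdAB]
    have h1 : μ₁ A - μ₂ A ≤ ρ A := by rw [← hμeq A hAm]; exact hμρ A hAm
    have h2 : ν₁ (Δ \ A) - ν₂ (Δ \ A) ≤ ρ (Δ \ A) := by
      rw [← hνeq _ hBm]; exact hνρ _ hBm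
    calc (μ₁ A + ν₂ A) + (μ₂ (Δ \ A) + ν₁ (Δ \ A))
        = ((μ₁ A - μ₂ A) + (ν₁ (Δ \ A) - ν₂ (Δ \ A)))
          + ((μ₂ A + μ₂ (Δ \ A)) + (ν₂ A + ν₂ (Δ \ A))) := by abel
      _ ≤ (ρ A + ρ (Δ \ A)) + ((μ₂ A + μ₂ (Δ \ A)) + (ν₂ A + ν₂ (Δ \ A))) :=
          add_le_add (add_le_add h1 h2) le_rfl
      _ = ρ Δ + (μ₂ Δ + ν₂ Δ) := by rw [hρΔ, hμ₂Δ, hν₂Δ]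


lemma span_empty {ρ : Set X → E} (hρ : InSpanMeasures ρ) : ρ ∅ = 0 := by
  obtain ⟨ρ₁, ρ₂, h1, h2, heq⟩ := hρ
  rw [heq _ MeasurableSet.empty, h1.1, h2.1, sub_zero]

lemma span_finadd {ρ : Set X → E} (hρ : InSpanMeasures ρ) {Δ : ℕ → Set X}
    (hm : ∀ n, MeasurableSet (Δ n)) (hd : Pairwise (Function.onFun Disjoint Δ)) (N : ℕ) :
    ρ (⋃ n ∈ Finset.range N, Δ n) = ∑ n ∈ Finset.range N, ρ (Δ n) := by
  obtain ⟨ρ₁, ρ₂, h1, h2, heq⟩ := hρ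
  rw [heq _ (meas_biUnion_measurable hm N), finadd h1 hm hd N, finadd h2 hm hd N,
    ← Finset.sum_sub_distrib]
  exact Finset.sum_congr rfl (fun n _ => (heq _ (hm n)).symm)

include hDed in
/-- Part 4: the span is Dedekind complete -/
lemma span_dedekind (𝒮 : Set (Set X → E)) (hne : 𝒮.Nonempty)
    (hsp : ∀ μ ∈ 𝒮, InSpanMeasures μ)
    (hbd : ∃ b : Set X → E, InSpanMeasures b ∧ ∀ μ ∈ 𝒮, MeasLE μ b) :
    ∃ ξ : Set X → E, InSpanMeasures ξ ∧ (∀ μ ∈ 𝒮, MeasLE μ ξ) ∧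
      ∀ ρ : Set X → E, InSpanMeasures ρ → (∀ μ ∈ 𝒮, MeasLE μ ρ) → MeasLE ξ ρ := by
  obtain ⟨μ₀, hμ₀S⟩ := hne
  obtain ⟨b, hbspan, hbub⟩ := hbd
  -- the directed family
  set D : Set (Set X → E) := {ρ | InSpanMeasures ρ ∧ MeasLE μ₀ ρ ∧
    ∀ σ, InSpanMeasures σ → (∀ μ ∈ 𝒮, MeasLE μ σ) → MeasLE ρ σ} with hD
  have hμ₀D : μ₀ ∈ D := ⟨hsp μ₀ hμ₀S, fun Δ _ => le_rfl, fun σ _ hub => hub μ₀ hμ₀S⟩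
  have hDb : ∀ ρ ∈ D, MeasLE ρ b := fun ρ hρ => hρ.2.2 b hbspan hbub
  -- pointwise supremum over `D`
  have hex : ∀ Δ : Set X, ∃ e : E, MeasurableSet Δ →
      IsLUB {e | ∃ ρ ∈ D, e = ρ Δ} e := by
    intro Δ
    by_cases h : MeasurableSet Δ
    · obtain ⟨a, ha⟩ := hDed {e | ∃ ρ ∈ D, e = ρ Δ} ⟨μ₀ Δ, μ₀, hμ₀D, rfl⟩
        ⟨b Δ, by rintro e ⟨ρ, hρ, rfl⟩; exact hDb ρ hρ Δ h⟩
      exact ⟨a, fun _ => ha⟩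
    · exact ⟨0, fun h' => absurd h' h⟩
  choose ξ₀ hξ₀ using hex
  have hξub : ∀ ρ ∈ D, ∀ Δ, MeasurableSet Δ → ρ Δ ≤ ξ₀ Δ :=
    fun ρ hρ Δ hΔ => (hξ₀ Δ hΔ).1 ⟨ρ, hρ, rfl⟩
  -- binary directedness of `D`
  have Dsup : ∀ ρ₁ ∈ D, ∀ ρ₂ ∈ D, ∃ ρ ∈ D, MeasLE ρ₁ ρ ∧ MeasLE ρ₂ ρ := by
    intro ρ₁ h1 ρ₂ h2
    obtain ⟨ρ, hρspan, ha, hb', hleast⟩ := span_sup hDed h1.1 h2.1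
    exact ⟨ρ, ⟨hρspan, fun Δ hΔ => (h1.2.1 Δ hΔ).trans (ha Δ hΔ),
      fun σ hσ hub => hleast σ hσ (h1.2.2 σ hσ hub) (h2.2.2 σ hσ hub)⟩, ha, hb'⟩
  have Ddir : ∀ N (r : ℕ → Set X → E), (∀ n, n < N → r n ∈ D) →
      ∃ ρ ∈ D, ∀ n, n < N → MeasLE (r n) ρ := by
    intro N
    induction N with
    | zero => exact fun r _ => ⟨μ₀, hμ₀D, by omega⟩
    | succ N ih =>
      intro r hr
      obtain ⟨ρ, hρD, hρdom⟩ := ih r (fun n hn => hr n (by omega))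
      obtain ⟨τ, hτD, hτ1, hτ2⟩ := Dsup ρ hρD (r N) (hr N (by omega))
      refine ⟨τ, hτD, fun n hn => ?_⟩
      rcases Nat.lt_succ_iff_lt_or_eq.mp hn with h | h
      · exact fun Δ hΔ => (hρdom n h Δ hΔ).trans (hτ1 Δ hΔ)
      · subst h; exact hτ2
  -- representation of μ₀
  obtain ⟨p, q, hp, hq, hμ₀eq⟩ := hsp μ₀ hμ₀S
  set ζ : Set X → E := fun Δ => ξ₀ Δ - μ₀ Δ + p Δ with hζdef
  have hζfin : IsFinMeasure ζ := by
    have hζ0 : ζ ∅ = 0 := by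
      have hT : {e | ∃ ρ ∈ D, e = ρ (∅ : Set X)} = {0} := by
        ext e
        constructor
        · rintro ⟨ρ, hρ, rfl⟩; exact span_empty hρ.1
        · rintro rfl; exact ⟨μ₀, hμ₀D, (span_empty (hsp μ₀ hμ₀S)).symm⟩
      have h0 : ξ₀ ∅ = 0 := by
        have := hξ₀ ∅ MeasurableSet.empty
        rw [hT] at this
        exact this.unique isLUB_singleton
      rw [hζdef]
      dsimp only
      rw [h0, span_empty (hsp μ₀ hμ₀S), hp.1]
      abel
    refine ⟨hζ0, ?_, ?_⟩
    · intro Δ hΔ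
      exact add_nonneg (sub_nonneg.mpr (hξub μ₀ hμ₀D Δ hΔ)) (hp.2.1 Δ hΔ)
    · intro Δ hm hd
      have hmU : MeasurableSet (⋃ n, Δ n) := MeasurableSet.iUnion hm
      have hζpos : ∀ n, 0 ≤ ζ (Δ n) := fun n =>
        add_nonneg (sub_nonneg.mpr (hξub μ₀ hμ₀D _ (hm n))) (hp.2.1 _ (hm n))
      have hζsum : ∀ N, (∑ n ∈ Finset.range N, ζ (Δ n))
          = ((∑ n ∈ Finset.range N, ξ₀ (Δ n)) - ∑ n ∈ Finset.range N, μ₀ (Δ n))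
            + ∑ n ∈ Finset.range N, p (Δ n) := by
        intro N
        rw [hζdef]
        dsimp only
        rw [Finset.sum_add_distrib, Finset.sum_sub_distrib]
      constructor
      · rintro x ⟨N, rfl⟩
        dsimp only
        -- split the union
        set W := ⋃ n ∈ Finset.range N, Δ n with hW
        have hWm : MeasurableSet W := meas_biUnion_measurable hm N
        set R := (⋃ n, Δ n) \ W with hR
        have hRm : MeasurableSet R := hmU.diff hWm
        have hWsub : W ⊆ ⋃ n, Δ n := by
          rw [hW]; exact Set.iUnion₂_subset (fun n _ => Set.subset_iUnion Δ n)
        have hWR : W ∪ R = ⋃ n, Δ n := Set.union_diff_cancel hWsub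
        have hWRd : Disjoint W R := disjoint_sdiff_self_right
        have hμ₀U : μ₀ (⋃ n, Δ n) = μ₀ W + μ₀ R := by
          conv_lhs => rw [← hWR]
          exact span_add (hsp μ₀ hμ₀S) hWm hRm hWRd
        have hpU : p (⋃ n, Δ n) = p W + p R := by
          conv_lhs => rw [← hWR]
          exact add_of_disjoint hp hWm hRm hWRd
        have hμ₀W : μ₀ W = ∑ n ∈ Finset.range N, μ₀ (Δ n) := span_finadd (hsp μ₀ hμ₀S) hm hd N
        have hpW : p W = ∑ n ∈ Finset.range N, p (Δ n) := finadd hp hm hd N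
        have hkey : (∑ n ∈ Finset.range N, ξ₀ (Δ n)) ≤ ξ₀ (⋃ n, Δ n) - μ₀ R := by
          refine sum_isLUB_le (fun n _ => hξ₀ _ (hm n)) ?_
          intro e he
          choose r hrD hre using he
          set r' : ℕ → Set X → E := fun n => if h : n < N then r n h else μ₀ with hr'
          have hrD' : ∀ n, n < N → r' n ∈ D := by
            intro n hn; rw [hr']; dsimp only; rw [dif_pos hn]; exact hrD n hn
          have hre' : ∀ n, n < N → e n = r' n (Δ n) := by
            intro n hn; rw [hr']; dsimp only; rw [dif_pos hn]; exact hre n hn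
          obtain ⟨ρ, hρD, hρdom⟩ := Ddir N r' hrD'
          have h1 : (∑ n ∈ Finset.range N, e n) ≤ ∑ n ∈ Finset.range N, ρ (Δ n) := by
            refine sum_le_sum' (fun n hn => ?_)
            rw [hre' n (Finset.mem_range.mp hn)]
            exact hρdom n (Finset.mem_range.mp hn) _ (hm n)
          have h2 : (∑ n ∈ Finset.range N, ρ (Δ n)) = ρ (⋃ n, Δ n) - ρ R := by
            have := span_add hρD.1 hWm hRm hWRd
            rw [hWR] at this
            rw [← span_finadd hρD.1 hm hd N, ← hW, this]
            abel
          refine h1.trans ?_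
          rw [h2]
          exact sub_le_sub (hξub ρ hρD _ hmU) (hρD.2.1 R hRm)
        have hpR : 0 ≤ p R := hp.2.1 R hRm
        rw [hζsum N, hζdef]
        dsimp only
        rw [← hμ₀W, ← hpW, hμ₀U, hpU]
        calc (∑ n ∈ Finset.range N, ξ₀ (Δ n)) - μ₀ W + p W
            ≤ (ξ₀ (⋃ n, Δ n) - μ₀ R) - μ₀ W + p W :=
              add_le_add (sub_le_sub_right hkey _) le_rfl
          _ ≤ (ξ₀ (⋃ n, Δ n) - μ₀ R) - μ₀ W + p W + p R := le_add_of_nonneg_right hpR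
          _ = ξ₀ (⋃ n, Δ n) - (μ₀ W + μ₀ R) + (p W + p R) := by abel
      · intro c hc
        rw [hζdef]
        dsimp only
        suffices h : ξ₀ (⋃ n, Δ n) ≤ c - p (⋃ n, Δ n) + μ₀ (⋃ n, Δ n) by
          calc ξ₀ (⋃ n, Δ n) - μ₀ (⋃ n, Δ n) + p (⋃ n, Δ n)
              ≤ (c - p (⋃ n, Δ n) + μ₀ (⋃ n, Δ n)) - μ₀ (⋃ n, Δ n) + p (⋃ n, Δ n) :=
                add_le_add (sub_le_sub_right h _) le_rfl
            _ = c := by abel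
        refine (hξ₀ _ hmU).2 ?_
        rintro e ⟨ρ, hρD, rfl⟩
        -- `ρ - μ₀` is a finite measure
        have hθspan : InSpanMeasures (fun Δ' => ρ Δ' - μ₀ Δ') := by
          obtain ⟨ρ₁, ρ₂, hρ1, hρ2, hρeq⟩ := hρD.1
          refine ⟨fun Δ' => ρ₁ Δ' + q Δ', fun Δ' => ρ₂ Δ' + p Δ',
            sum_measure hρ1 hq, sum_measure hρ2 hp, fun Δ' hΔ' => ?_⟩
          dsimp only
          rw [hρeq Δ' hΔ', hμ₀eq Δ' hΔ']
          abel
        have hθfin : IsFinMeasure (fun Δ' => ρ Δ' - μ₀ Δ') :=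
          pos_span_measure hθspan (fun Δ' hΔ' => sub_nonneg.mpr (hρD.2.1 Δ' hΔ'))
        have hθlub := hθfin.2.2 Δ hm hd
        rw [← sub_le_iff_le_add]
        refine hθlub.2 ?_
        rintro x ⟨N, rfl⟩
        dsimp only
        have h1 : (∑ n ∈ Finset.range N, (ρ (Δ n) - μ₀ (Δ n)))
            ≤ ∑ n ∈ Finset.range N, (ξ₀ (Δ n) - μ₀ (Δ n)) :=
          sum_le_sum' (fun n _ => sub_le_sub_right (hξub ρ hρD _ (hm n)) _)
        refine h1.trans ?_
        rw [le_sub_iff_add_le, add_comm, ← le_sub_iff_add_le]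
        refine (hp.2.2 Δ hm hd).2 ?_
        rintro y ⟨M, rfl⟩
        dsimp only
        rw [le_sub_iff_add_le, add_comm]
        set K := max N M with hK
        have hmono1 : (∑ n ∈ Finset.range N, (ξ₀ (Δ n) - μ₀ (Δ n)))
            ≤ ∑ n ∈ Finset.range K, (ξ₀ (Δ n) - μ₀ (Δ n)) :=
          psum_mono (fun n => sub_nonneg.mpr (hξub μ₀ hμ₀D _ (hm n))) (le_max_left _ _)
        have hmono2 : (∑ n ∈ Finset.range M, p (Δ n))
            ≤ ∑ n ∈ Finset.range K, p (Δ n) :=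
          psum_apply_mono hp hm (le_max_right _ _)
        calc (∑ n ∈ Finset.range N, (ξ₀ (Δ n) - μ₀ (Δ n))) + ∑ n ∈ Finset.range M, p (Δ n)
            ≤ (∑ n ∈ Finset.range K, (ξ₀ (Δ n) - μ₀ (Δ n))) + ∑ n ∈ Finset.range K, p (Δ n) :=
              add_le_add hmono1 hmono2
          _ = ∑ n ∈ Finset.range K, ζ (Δ n) := by
              rw [hζsum K, Finset.sum_sub_distrib]
          _ ≤ c := hc ⟨K, rfl⟩
  -- assemble
  have hξspan : InSpanMeasures ξ₀ := by
    refine ⟨ζ, q, hζfin, hq, fun Δ hΔ => ?_⟩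
    rw [hζdef]
    dsimp only
    rw [hμ₀eq Δ hΔ]
    abel
  refine ⟨ξ₀, hξspan, ?_, ?_⟩
  · intro μ hμS Δ hΔ
    obtain ⟨τ, hτspan, hμτ, hμ₀τ, hleast⟩ := span_sup hDed (hsp μ hμS) (hsp μ₀ hμ₀S)
    have hτD : τ ∈ D := ⟨hτspan, hμ₀τ,
      fun σ hσ hub => hleast σ hσ (hub μ hμS) (hub μ₀ hμ₀S)⟩
    exact (hμτ Δ hΔ).trans (hξub τ hτD Δ hΔ)
  · intro ρ hρ hub Δ hΔ
    refine (hξ₀ Δ hΔ).2 ?_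
    rintro e ⟨σ, hσD, rfl⟩
    exact hσD.2.2 ρ hρ hub Δ hΔ

end Stmt17Aux

/-- for `E` Dedekind complete, the span `M(X,Ω,E)` of the finite
`E⁺`-valued measures, ordered pointwise, is a Dedekind complete vector lattice
whose positive cone consists exactly of the finite `E⁺`-valued measures; in
particular a pointwise-positive difference of finite measures is σ-additive. -/
theorem stmt_17 (hDed : ∀ T : Set E, T.Nonempty → BddAbove T → ∃ a, IsLUB T a) :
    -- the positive cone of the span is the set of finite measures; in
    -- particular `μ − ν ≥ 0` pointwise implies `μ − ν` is σ-additive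
    (∀ μ ν : Set X → E, IsFinMeasure μ → IsFinMeasure ν →
      (∀ Δ, MeasurableSet Δ → ν Δ ≤ μ Δ) →
      IsFinMeasure (fun Δ => μ Δ - ν Δ)) ∧
    (∀ μ : Set X → E, InSpanMeasures μ → (∀ Δ, MeasurableSet Δ → 0 ≤ μ Δ) →
      IsFinMeasure μ) ∧
    -- `M(X,Ω,E)` is a lattice: any two elements have a supremum in it
    (∀ μ ν : Set X → E, InSpanMeasures μ → InSpanMeasures ν →
      ∃ ξ : Set X → E, InSpanMeasures ξ ∧ MeasLE μ ξ ∧ MeasLE ν ξ ∧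
        ∀ ρ : Set X → E, InSpanMeasures ρ → MeasLE μ ρ → MeasLE ν ρ →
          MeasLE ξ ρ) ∧
    -- `M(X,Ω,E)` is Dedekind complete
    ∀ 𝒮 : Set (Set X → E), 𝒮.Nonempty → (∀ μ ∈ 𝒮, InSpanMeasures μ) →
      (∃ b : Set X → E, InSpanMeasures b ∧ ∀ μ ∈ 𝒮, MeasLE μ b) →
      ∃ ξ : Set X → E, InSpanMeasures ξ ∧ (∀ μ ∈ 𝒮, MeasLE μ ξ) ∧
        ∀ ρ : Set X → E, InSpanMeasures ρ → (∀ μ ∈ 𝒮, MeasLE μ ρ) →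
          MeasLE ξ ρ := by
  exact ⟨fun μ ν hμ hν hle => Stmt17Aux.diff_measure hμ hν hle,
    fun μ hμ hpos => Stmt17Aux.pos_span_measure hμ hpos,
    fun μ ν hμ hν => Stmt17Aux.span_sup hDed hμ hν,
    fun 𝒮 hne hsp hbd => Stmt17Aux.span_dedekind hDed 𝒮 hne hsp hbd⟩
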